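/- For every n ∈ ℕ the squared norms satisfy h_{n+1}·(d+2an+a)·(d+2an−a)·(d+2an)²·k_n² = (n+1)·(d+an−a)·(−a³n⁴ − 4dcna + dbe + db²n − d²c − ae² − 4cn²a² − 2nade − 2n³a²d + n²adb + bnd² − n²ad² + n²ab² − 2a²en²)·k_{n+1}²·h_n. (Corollary 8) -/

import Mathlib

open Polynomial MeasureTheory

/-- Forward difference operator on real polynomials: `Δp = p(X+1) - p`. -/
noncomputable def polyFwdDiff (p : Polynomial ℝ) : Polynomial ℝ := p.comp (X + 1) - p

/-- Backward difference operator on real polynomials: `∇p = p - p(X-1)`. -/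
noncomputable def polyBwdDiff (p : Polynomial ℝ) : Polynomial ℝ := p - p.comp (X - 1)

-- choose lemmas
lemma ch2 (m : ℕ) : 2 * Nat.choose (m+2) 2 = (m+2)*(m+1) := by
  induction m with
  | zero => rfl
  | succ n ih =>
    rw [show n+1+2 = (n+2)+1 from rfl, Nat.choose_succ_succ, Nat.mul_add, ih, Nat.choose_one_right]
    ring
lemma ch3 (m : ℕ) : 6 * Nat.choose (m+3) 3 = (m+3)*(m+2)*(m+1) := by
  induction m with
  | zero => rfl
  | succ n ih =>
    rw [show n+1+3 = (n+3)+1 from rfl, Nat.choose_succ_succ, Nat.mul_add, ih,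
      show (6:ℕ) = 3*2 from rfl, Nat.mul_assoc, ch2]
    ring
lemma ch4 (m : ℕ) : 24 * Nat.choose (m+4) 4 = (m+4)*(m+3)*(m+2)*(m+1) := by
  induction m with
  | zero => rfl
  | succ n ih =>
    rw [show n+1+4 = (n+4)+1 from rfl, Nat.choose_succ_succ, Nat.mul_add, ih,
      show (24:ℕ) = 4*6 from rfl, Nat.mul_assoc, ch3]
    ring
lemma chsymm2 (m : ℕ) : Nat.choose (m+2) m = Nat.choose (m+2) 2 := by
  rw [← Nat.choose_symm (by omega : 2 ≤ m + 2)]; congr 1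
lemma chsymm3 (m : ℕ) : Nat.choose (m+3) m = Nat.choose (m+3) 3 := by
  rw [← Nat.choose_symm (by omega : 3 ≤ m + 3)]; congr 1
lemma chsymm4 (m : ℕ) : Nat.choose (m+4) m = Nat.choose (m+4) 4 := by
  rw [← Nat.choose_symm (by omega : 4 ≤ m + 4)]; congr 1

lemma ch2R (m : ℕ) : ((m+2).choose m : ℝ) = ((m:ℝ)+2)*((m:ℝ)+1)/2 := by
  have h := congrArg (Nat.cast : ℕ → ℝ) (ch2 m)
  push_cast at h
  rw [chsymm2]
  push_cast
  linarith
lemma ch3R (m : ℕ) : ((m+3).choose m : ℝ) = ((m:ℝ)+3)*((m:ℝ)+2)*((m:ℝ)+1)/6 := by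
  have h := congrArg (Nat.cast : ℕ → ℝ) (ch3 m)
  push_cast at h
  rw [chsymm3]
  push_cast
  linarith
lemma ch4R (m : ℕ) : ((m+4).choose m : ℝ) = ((m:ℝ)+4)*((m:ℝ)+3)*((m:ℝ)+2)*((m:ℝ)+1)/24 := by
  have h := congrArg (Nat.cast : ℕ → ℝ) (ch4 m)
  push_cast at h
  rw [chsymm4]
  push_cast
  linarith

/-- combined coefficient weight -/
noncomputable def Wc (a b c d e lam : ℝ) (j m : ℕ) : ℝ :=
  a * ((j+2).choose m : ℝ) + (b - 2*a + d) * ((j+1).choose m : ℝ)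
  + (a - b + c + e - d) * (j.choose m : ℝ)
  + a * (-1:ℝ)^(j+2-m) * ((j+2).choose m : ℝ) + (b + 2*a) * (-1:ℝ)^(j+1-m) * ((j+1).choose m : ℝ)
  + (a + b + c) * (-1:ℝ)^(j-m) * (j.choose m : ℝ)
  - 2*a * (if m = j+2 then (1:ℝ) else 0) - (2*b+d) * (if m = j+1 then (1:ℝ) else 0)
  + (lam - 2*c - e) * (if m = j then (1:ℝ) else 0)

lemma WcMM (a b c d e lam : ℝ) (m : ℕ) :
    Wc a b c d e lam m m = a*(m:ℝ)*((m:ℝ)-1) + d*(m:ℝ) + lam := by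
  unfold Wc
  rw [show m+2-m = 2 by omega, show m+1-m = 1 by omega, show m-m = 0 by omega,
    if_neg (by omega), if_neg (by omega), if_pos rfl,
    ch2R, Nat.choose_succ_self_right, Nat.choose_self]
  push_cast
  ring

lemma WcM1M (a b c d e lam : ℝ) (m : ℕ) :
    Wc a b c d e lam (m+1) m = ((m:ℝ)+1)*((2*b+d)*(m:ℝ)+2*e)/2 := by
  unfold Wc
  rw [show m+1+2-m = 3 by omega, show m+1+1-m = 2 by omega, show m+1-m = 1 by omega,
    if_neg (by omega), if_neg (by omega), if_neg (by omega),
    show m+1+2 = m+3 from rfl, show m+1+1 = m+2 from rfl,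
    ch3R, ch2R, Nat.choose_succ_self_right]
  push_cast
  ring

lemma WcM2M (a b c d e lam : ℝ) (m : ℕ) :
    Wc a b c d e lam (m+2) m =
      (2*a*((m:ℝ)+4)*((m:ℝ)+3)*((m:ℝ)+2)*((m:ℝ)+1) + 4*(d-4*a)*((m:ℝ)+3)*((m:ℝ)+2)*((m:ℝ)+1)
        + 12*(2*a+2*c+e-d)*((m:ℝ)+2)*((m:ℝ)+1))/24 := by
  unfold Wc
  rw [show m+2+2-m = 4 by omega, show m+2+1-m = 3 by omega, show m+2-m = 2 by omega,
    if_neg (by omega), if_neg (by omega), if_neg (by omega),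
    show m+2+2 = m+4 from rfl, show m+2+1 = m+3 from rfl,
    ch4R, ch3R, ch2R]
  push_cast
  ring

lemma Wc_zero (a b c d e lam : ℝ) {j m : ℕ} (hj : j < m) : Wc a b c d e lam j m = 0 := by
  unfold Wc
  rcases (by omega : j + 1 = m ∨ j + 2 = m ∨ j + 2 < m) with h | h | h
  · subst h
    rw [show j+2-(j+1) = 1 by omega, show j+1-(j+1) = 0 by omega,
      if_neg (by omega), if_pos rfl, if_neg (by omega),
      Nat.choose_succ_self_right, Nat.choose_self,
      Nat.choose_eq_zero_of_lt (by omega)]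
    push_cast
    ring
  · subst h
    rw [show j+2-(j+2) = 0 by omega, if_pos rfl, if_neg (by omega), if_neg (by omega),
      Nat.choose_self, Nat.choose_eq_zero_of_lt (by omega),
      Nat.choose_eq_zero_of_lt (by omega)]
    push_cast
    ring
  · rw [Nat.choose_eq_zero_of_lt (by omega), Nat.choose_eq_zero_of_lt (by omega),
      Nat.choose_eq_zero_of_lt (by omega), if_neg (by omega), if_neg (by omega),
      if_neg (by omega)]
    push_cast
    ring


lemma fwdbwd (q : Polynomial ℝ) :
    polyFwdDiff (polyBwdDiff q) = q.comp (X + 1) - 2*q + q.comp (X - 1) := by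
  unfold polyFwdDiff polyBwdDiff
  rw [sub_comp, comp_assoc]
  norm_num
  ring

lemma coeff_X_sub_one_pow' (n k : ℕ) :
    (((X : Polynomial ℝ) - 1) ^ n).coeff k = (-1:ℝ)^(n-k) * (n.choose k : ℝ) := by
  rw [show ((X : Polynomial ℝ) - 1) = X + C (-1) by simp [sub_eq_add_neg], coeff_X_add_C_pow]

/-- the per-monomial polynomial -/
noncomputable def Gp (a b c d e lam : ℝ) (j : ℕ) : Polynomial ℝ :=
  C a * (X+1)^(j+2) + C (b-2*a+d) * (X+1)^(j+1) + C (a-b+c+e-d) * (X+1)^j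
  + C a * (X-1)^(j+2) + C (b+2*a) * (X-1)^(j+1) + C (a+b+c) * (X-1)^j
  - C (2*a) * X^(j+2) - C (2*b+d) * X^(j+1) + C (lam-2*c-e) * X^j

lemma Gp_coeff (a b c d e lam : ℝ) (j m : ℕ) :
    (Gp a b c d e lam j).coeff m = Wc a b c d e lam j m := by
  unfold Gp Wc
  simp only [coeff_add, coeff_sub, coeff_C_mul, coeff_X_pow, coeff_X_add_one_pow,
    coeff_X_sub_one_pow']
  ring_nf

lemma Gp_eq (a b c d e lam : ℝ) (j : ℕ) :
    (C a * X^2 + C b * X + C c) * ((X+1)^j - 2*X^j + (X-1)^j)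
      + (C d * X + C e) * ((X+1)^j - X^j) + C lam * X^j = Gp a b c d e lam j := by
  unfold Gp
  simp only [map_sub, map_add, map_mul, map_ofNat, C_1]
  ring

lemma master (a b c d e lam : ℝ) (q : Polynomial ℝ) (N m : ℕ) (hq : q.natDegree < N + 1) :
    ((C a * X^2 + C b * X + C c) * (polyFwdDiff (polyBwdDiff q))
      + (C d * X + C e) * (polyFwdDiff q) + C lam * q).coeff m
    = ∑ j ∈ Finset.range (N+1), q.coeff j * Wc a b c d e lam j m := by
  have hsum : q = ∑ j ∈ Finset.range (N+1), C (q.coeff j) * X ^ j := by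
    conv_lhs => rw [as_sum_range' q (N+1) hq]
    exact Finset.sum_congr rfl fun j _ => C_mul_X_pow_eq_monomial.symm
  have hpoly : (C a * X^2 + C b * X + C c) * (polyFwdDiff (polyBwdDiff q))
      + (C d * X + C e) * (polyFwdDiff q) + C lam * q
      = ∑ j ∈ Finset.range (N+1), C (q.coeff j) * Gp a b c d e lam j := by
    rw [fwdbwd]
    unfold polyFwdDiff
    conv_lhs => rw [hsum]
    simp only [Polynomial.sum_comp, mul_comp, C_comp, X_comp, pow_comp, add_comp, one_comp]
    rw [← sub_eq_zero]
    simp only [mul_sub, mul_add, Finset.mul_sum, ← Finset.sum_sub_distrib,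
      ← Finset.sum_add_distrib]
    apply Finset.sum_eq_zero
    intro j hj
    rw [← Gp_eq a b c d e lam j]
    ring
  rw [hpoly, finset_sum_coeff]
  exact Finset.sum_congr rfl fun j _ => by rw [coeff_C_mul, Gp_coeff]


set_option maxRecDepth 100000 in
set_option maxHeartbeats 3000000 in
theorem discrete_squared_norm_ratio
    (a b c d e : ℝ)
    (had : ∀ m : ℤ, -3 ≤ m → a * m + d ≠ 0)
    (p : ℕ → Polynomial ℝ) (k : ℕ → ℝ)
    (hdeg : ∀ n : ℕ, (p n).degree = n)
    (hlead : ∀ n : ℕ, (p n).coeff n = k n)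
    (hk0 : ∀ n : ℕ, k n ≠ 0)
    (hde : ∀ n : ℕ,
      (Polynomial.C a * X ^ 2 + Polynomial.C b * X + Polynomial.C c) *
          polyFwdDiff (polyBwdDiff (p n)) +
        (Polynomial.C d * X + Polynomial.C e) * polyFwdDiff (p n) +
        Polynomial.C (-(a * n * ((n : ℝ) - 1) + d * n)) * p n = 0)
    (μ : Measure ℝ)
    (hint : ∀ q : Polynomial ℝ, Integrable (fun x => q.eval x) μ)
    (horth : ∀ m n : ℕ, m ≠ n → ∫ x, (p m).eval x * (p n).eval x ∂μ = 0)
    (h : ℕ → ℝ)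
    (hh : ∀ n : ℕ, h n = ∫ x, ((p n).eval x) ^ 2 ∂μ)
    (hh0 : ∀ n : ℕ, h n ≠ 0) :
    ∀ n : ℕ,
      h (n + 1) * (d + 2 * a * n + a) * (d + 2 * a * n - a) * (d + 2 * a * n) ^ 2 *
          (k n) ^ 2 =
        ((n : ℝ) + 1) * (d + a * n - a) *
          (-(a ^ 3) * (n : ℝ) ^ 4 - 4 * d * c * n * a + d * b * e + d * b ^ 2 * n -
            d ^ 2 * c - a * e ^ 2 - 4 * c * (n : ℝ) ^ 2 * a ^ 2 - 2 * n * a * d * e -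
            2 * (n : ℝ) ^ 3 * a ^ 2 * d + (n : ℝ) ^ 2 * a * d * b + b * n * d ^ 2 -
            (n : ℝ) ^ 2 * a * d ^ 2 + (n : ℝ) ^ 2 * a * b ^ 2 -
            2 * a ^ 2 * e * (n : ℝ) ^ 2) *
          (k (n + 1)) ^ 2 * h n := by
  -- basic degree facts
  have hnat : ∀ i, (p i).natDegree = i := fun i => natDegree_eq_of_degree_eq_some (hdeg i)
  have hczero : ∀ i j, i < j → (p i).coeff j = 0 := fun i j hij =>
    coeff_eq_zero_of_natDegree_lt (by rw [hnat]; exact hij)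
  -- coefficient extraction from the difference equation
  have key : ∀ (i m : ℕ), ∑ j ∈ Finset.range (i+1),
      (p i).coeff j * Wc a b c d e (-(a*(i:ℝ)*((i:ℝ)-1)+d*(i:ℝ))) j m = 0 := by
    intro i m
    rw [← master a b c d e _ (p i) i m (by rw [hnat]; omega)]
    rw [hde i, coeff_zero]
  have E1 : ∀ m : ℕ, 2*(2*a*(m:ℝ)+d) * (p (m+1)).coeff m
      = ((m:ℝ)+1)*((2*b+d)*(m:ℝ)+2*e) * k (m+1) := by
    intro m
    have hk := key (m+1) m
    rw [Finset.sum_range_succ, Finset.sum_range_succ,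
      Finset.sum_eq_zero (fun j hj => by
        rw [Wc_zero a b c d e _ (Finset.mem_range.mp hj), mul_zero]),
      WcMM, WcM1M, hlead (m+1)] at hk
    push_cast at hk ⊢
    linear_combination (-2) * hk
  have E2 : ∀ m : ℕ, 48*(a*(2*(m:ℝ)+1)+d) * (p (m+2)).coeff m
      = 12*((m:ℝ)+1)*((2*b+d)*(m:ℝ)+2*e) * (p (m+2)).coeff (m+1)
        + (2*a*((m:ℝ)+4)*((m:ℝ)+3)*((m:ℝ)+2)*((m:ℝ)+1)
          + 4*(d-4*a)*((m:ℝ)+3)*((m:ℝ)+2)*((m:ℝ)+1)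
          + 12*(2*a+2*c+e-d)*((m:ℝ)+2)*((m:ℝ)+1)) * k (m+2) := by
    intro m
    have hk := key (m+2) m
    rw [Finset.sum_range_succ, Finset.sum_range_succ, Finset.sum_range_succ,
      Finset.sum_eq_zero (fun j hj => by
        rw [Wc_zero a b c d e _ (Finset.mem_range.mp hj), mul_zero]),
      WcMM, WcM1M, WcM2M, hlead (m+2)] at hk
    push_cast at hk ⊢
    linear_combination (-24) * hk
  -- integrability helpers
  have hint2 : ∀ q r : Polynomial ℝ, Integrable (fun x => q.eval x * r.eval x) μ := by
    intro q r
    simpa using hint (q * r)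
  have hint3 : ∀ q : Polynomial ℝ, Integrable (fun x => (q.eval x)^2) μ := by
    intro q
    simpa [sq] using hint2 q q
  -- orthogonality to all lower-degree polynomials
  have ORTH : ∀ (N : ℕ) (q : Polynomial ℝ) (m : ℕ), q.natDegree ≤ N → q.degree < (m:ℕ) →
      ∫ x, (p m).eval x * q.eval x ∂μ = 0 := by
    intro N
    induction N with
    | zero =>
      intro q m hN hdq
      by_cases hq0 : q = 0
      · simp [hq0]
      have hm : 0 < m := by
        rcases Nat.eq_zero_or_pos m with h0 | hp
        · exfalso
          rw [h0, Nat.cast_zero] at hdq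
          exact absurd hdq (not_lt.mpr (zero_le_degree_iff.mpr hq0))
        · exact hp
      have hq : q = C (q.coeff 0) := eq_C_of_natDegree_le_zero hN
      have hp0 : p 0 = C (k 0) := by
        rw [← hlead 0]
        exact eq_C_of_natDegree_le_zero (le_of_eq (hnat 0))
      have hsplit : (fun x => (p m).eval x * q.eval x)
          = fun x => (q.coeff 0 / k 0) * ((p m).eval x * (p 0).eval x) := by
        funext x
        rw [hp0]
        conv_lhs => rw [hq]
        simp only [eval_C]
        have := hk0 0
        field_simp
      rw [hsplit, MeasureTheory.integral_const_mul, horth m 0 (by omega), mul_zero]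
    | succ N ih =>
      intro q m hN hdq
      by_cases hq0 : q = 0
      · simp [hq0]
      set j := q.natDegree with hj
      have hjm : j < m := by
        rw [hj, natDegree_lt_iff_degree_lt hq0]
        exact hdq
      set α := q.coeff j / k j with hα
      set q' := q - C α * p j with hq'
      have hdq' : q'.degree < (j:ℕ) := by
        rw [degree_lt_iff_coeff_zero]
        intro i hi
        rcases eq_or_lt_of_le hi with rfl | hlt
        · rw [hq', coeff_sub, coeff_C_mul, hlead j, hα,
            div_mul_cancel₀ _ (hk0 j), sub_self]
        · rw [hq', coeff_sub, coeff_C_mul, hczero j i hlt,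
            coeff_eq_zero_of_natDegree_lt (show q.natDegree < i from hlt), mul_zero, sub_zero]
      have hsplit : (fun x => (p m).eval x * q.eval x)
          = fun x => α * ((p m).eval x * (p j).eval x) + (p m).eval x * q'.eval x := by
        funext x
        rw [hq']
        simp only [eval_sub, eval_mul, eval_C]
        ring
      rw [hsplit, integral_add ((hint2 (p m) (p j)).const_mul α) (hint2 (p m) q'),
        MeasureTheory.integral_const_mul, horth m j (by omega), mul_zero, zero_add]
      by_cases hq'0 : q' = 0
      · simp [hq'0]
      · exact ih q' m (by
          have := (natDegree_lt_iff_degree_lt hq'0).mpr hdq'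
          omega) (lt_trans hdq' (by exact_mod_cast Nat.cast_lt.mpr hjm))
  intro n
  -- notation
  set u1 := (p (n+1)).coeff n with hu1def
  set u2 := (p (n+2)).coeff (n+1) with hu2def
  set v2 := (p (n+2)).coeff n with hv2def
  set v1 := (if n = 0 then (0:ℝ) else (p (n+1)).coeff (n-1)) with hv1def
  set W := v1*k (n+1)*k (n+2) - v2*k (n+1)^2 - u1^2*k (n+2) + u1*u2*k (n+1) with hW
  -- first integral identity
  have I1 : k (n+1) * ∫ x, x * ((p n).eval x * (p (n+1)).eval x) ∂μ = k n * h (n+1) := by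
    set q := C (k (n+1)) * (X * p n) - C (k n) * p (n+1) with hqdef
    have hdq : q.degree < ((n+1 : ℕ) : WithBot ℕ) := by
      rw [degree_lt_iff_coeff_zero]
      intro i hi
      obtain ⟨i', rfl⟩ : ∃ i', i = i'+1 := ⟨i-1, by omega⟩
      rw [hqdef, coeff_sub, coeff_C_mul, coeff_C_mul, coeff_X_mul]
      rcases (by omega : i' = n ∨ n < i') with heq | hlt
      · rw [heq, hlead n, hlead (n+1)]
        ring
      · rw [hczero n i' hlt, hczero (n+1) (i'+1) (by omega), mul_zero, mul_zero, sub_self]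
    have hsplit : (fun x => k (n+1) * (x * ((p n).eval x * (p (n+1)).eval x)))
        = fun x => (k n) * ((p (n+1)).eval x)^2 + (p (n+1)).eval x * q.eval x := by
      funext x
      rw [hqdef]
      simp only [eval_sub, eval_mul, eval_C, eval_X]
      ring
    calc k (n+1) * ∫ x, x * ((p n).eval x * (p (n+1)).eval x) ∂μ
        = ∫ x, k (n+1) * (x * ((p n).eval x * (p (n+1)).eval x)) ∂μ :=
          (MeasureTheory.integral_const_mul _ _).symm
      _ = ∫ x, ((k n) * ((p (n+1)).eval x)^2 + (p (n+1)).eval x * q.eval x) ∂μ := by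
          rw [hsplit]
      _ = k n * h (n+1) := by
          rw [integral_add ((hint3 (p (n+1))).const_mul _) (hint2 (p (n+1)) q),
            MeasureTheory.integral_const_mul, ORTH q.natDegree q (n+1) le_rfl hdq, ← hh (n+1),
            add_zero]
  -- second integral identity
  have I2 : (k n * (k (n+1) * k (n+2))) * ∫ x, x * ((p n).eval x * (p (n+1)).eval x) ∂μ
      = W * h n := by
    set r := C (k n*(k (n+1)*k (n+2))) * (X * p (n+1)) - C (k n*k (n+1)^2) * p (n+2)
      - C (k n*(u1*k (n+2) - u2*k (n+1))) * p (n+1) - C W * p n with hrdef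
    have hv1X : (X * p (n+1)).coeff n = v1 := by
      rcases Nat.eq_zero_or_pos n with rfl | hn
      · rw [hv1def, if_pos rfl, mul_coeff_zero, coeff_X_zero, zero_mul]
      · obtain ⟨j, rfl⟩ : ∃ j, n = j+1 := ⟨n-1, by omega⟩
        rw [hv1def, if_neg (by omega), coeff_X_mul]
        norm_num
    have hdr : r.degree < ((n : ℕ) : WithBot ℕ) := by
      rw [degree_lt_iff_coeff_zero]
      intro i hi
      rcases (by omega : i = n ∨ i = n+1 ∨ i = n+2 ∨ n+3 ≤ i) with heq | heq | heq | hlt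
      · rw [heq, hrdef, coeff_sub, coeff_sub, coeff_sub, coeff_C_mul, coeff_C_mul,
          coeff_C_mul, coeff_C_mul, hv1X, ← hv2def, ← hu1def, hlead n, hW]
        ring
      · rw [heq, hrdef, coeff_sub, coeff_sub, coeff_sub, coeff_C_mul, coeff_C_mul,
          coeff_C_mul, coeff_C_mul, coeff_X_mul, ← hu1def, ← hu2def, hlead (n+1),
          hczero n (n+1) (by omega)]
        ring
      · rw [heq, hrdef, coeff_sub, coeff_sub, coeff_sub, coeff_C_mul, coeff_C_mul,
          coeff_C_mul, coeff_C_mul, coeff_X_mul, hlead (n+1), hlead (n+2),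
          hczero (n+1) (n+2) (by omega), hczero n (n+2) (by omega)]
        ring
      · obtain ⟨i', rfl⟩ : ∃ i', i = i'+1 := ⟨i-1, by omega⟩
        rw [hrdef, coeff_sub, coeff_sub, coeff_sub, coeff_C_mul, coeff_C_mul, coeff_C_mul,
          coeff_C_mul, coeff_X_mul, hczero (n+1) i' (by omega), hczero (n+2) (i'+1) (by omega),
          hczero (n+1) (i'+1) (by omega), hczero n (i'+1) (by omega)]
        ring
    have hsplit : (fun x => (k n * (k (n+1) * k (n+2))) * (x * ((p n).eval x * (p (n+1)).eval x)))
        = fun x => ((k n*k (n+1)^2) * ((p n).eval x * (p (n+2)).eval x)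
            + (k n*(u1*k (n+2) - u2*k (n+1))) * ((p n).eval x * (p (n+1)).eval x))
          + (W * ((p n).eval x)^2 + (p n).eval x * r.eval x) := by
      funext x
      rw [hrdef]
      simp only [eval_sub, eval_mul, eval_C, eval_X]
      ring
    calc (k n * (k (n+1) * k (n+2))) * ∫ x, x * ((p n).eval x * (p (n+1)).eval x) ∂μ
        = ∫ x, (k n * (k (n+1) * k (n+2))) * (x * ((p n).eval x * (p (n+1)).eval x)) ∂μ :=
          (MeasureTheory.integral_const_mul _ _).symm
      _ = ∫ x, (((k n*k (n+1)^2) * ((p n).eval x * (p (n+2)).eval x)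
            + (k n*(u1*k (n+2) - u2*k (n+1))) * ((p n).eval x * (p (n+1)).eval x))
          + (W * ((p n).eval x)^2 + (p n).eval x * r.eval x)) ∂μ := by rw [hsplit]
      _ = W * h n := by
          have hQ1 : Integrable (fun x => (k n*k (n+1)^2) * ((p n).eval x * (p (n+2)).eval x)
              + (k n*(u1*k (n+2) - u2*k (n+1))) * ((p n).eval x * (p (n+1)).eval x)) μ :=
            ((hint2 (p n) (p (n+2))).const_mul _).add ((hint2 (p n) (p (n+1))).const_mul _)
          have hQ2 : Integrable (fun x => W * ((p n).eval x)^2 + (p n).eval x * r.eval x) μ :=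
            ((hint3 (p n)).const_mul W).add (hint2 (p n) r)
          rw [integral_add hQ1 hQ2,
            integral_add ((hint2 (p n) (p (n+2))).const_mul _)
              ((hint2 (p n) (p (n+1))).const_mul _),
            integral_add ((hint3 (p n)).const_mul W) (hint2 (p n) r),
            MeasureTheory.integral_const_mul, MeasureTheory.integral_const_mul,
            MeasureTheory.integral_const_mul,
            horth n (n+2) (by omega), horth n (n+1) (by omega),
            ORTH r.natDegree r n le_rfl hdr, ← hh n]
          ring
  have hclear : h (n+1) * (k n^2 * k (n+2)) = h n * W := by
    calc h (n+1) * (k n^2 * k (n+2))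
        = (k n*k (n+2))*(k n*h (n+1)) := by ring
      _ = (k n*k (n+2))*(k (n+1) * ∫ x, x * ((p n).eval x * (p (n+1)).eval x) ∂μ) := by
          rw [I1]
      _ = (k n * (k (n+1) * k (n+2))) * ∫ x, x * ((p n).eval x * (p (n+1)).eval x) ∂μ := by
          ring
      _ = W * h n := I2
      _ = h n * W := by ring
  -- nonvanishing denominators
  have hD1 : 2*a*(n:ℝ)+d ≠ 0 := by
    have := had (2*(n:ℤ)) (by omega)
    push_cast at this
    intro hcon; apply this; linarith
  have hD2 : 2*a*((n:ℝ)+1)+d ≠ 0 := by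
    have := had (2*(n:ℤ)+2) (by omega)
    push_cast at this
    intro hcon; apply this; linarith
  have hD3 : a*(2*(n:ℝ)+1)+d ≠ 0 := by
    have := had (2*(n:ℤ)+1) (by omega)
    push_cast at this
    intro hcon; apply this; linarith
  have hD4 : a*(2*(n:ℝ)-1)+d ≠ 0 := by
    have := had (2*(n:ℤ)-1) (by omega)
    push_cast at this
    intro hcon; apply this; linarith
  -- closed forms of the coefficients
  have hu1' : u1 = ((n:ℝ)+1)*((2*b+d)*(n:ℝ)+2*e)*k (n+1) / (2*(2*a*(n:ℝ)+d)) := by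
    have := E1 n
    rw [eq_div_iff (mul_ne_zero two_ne_zero hD1)]
    linear_combination this
  have hu2' : u2 = ((n:ℝ)+2)*((2*b+d)*((n:ℝ)+1)+2*e)*k (n+2) / (2*(2*a*((n:ℝ)+1)+d)) := by
    have := E1 (n+1)
    push_cast at this
    rw [show n+1+1 = n+2 from rfl] at this
    rw [eq_div_iff (mul_ne_zero two_ne_zero hD2)]
    linear_combination this
  have hv2' : v2 = (12*((n:ℝ)+1)*((2*b+d)*(n:ℝ)+2*e) * u2
      + (2*a*((n:ℝ)+4)*((n:ℝ)+3)*((n:ℝ)+2)*((n:ℝ)+1)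
        + 4*(d-4*a)*((n:ℝ)+3)*((n:ℝ)+2)*((n:ℝ)+1)
        + 12*(2*a+2*c+e-d)*((n:ℝ)+2)*((n:ℝ)+1)) * k (n+2)) / (48*(a*(2*(n:ℝ)+1)+d)) := by
    have := E2 n
    rw [eq_div_iff (mul_ne_zero (by norm_num) hD3)]
    linear_combination this
  have hv1' : v1 = (12*(n:ℝ)*((2*b+d)*((n:ℝ)-1)+2*e) * u1
      + (2*a*((n:ℝ)+3)*((n:ℝ)+2)*((n:ℝ)+1)*(n:ℝ)
        + 4*(d-4*a)*((n:ℝ)+2)*((n:ℝ)+1)*(n:ℝ)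
        + 12*(2*a+2*c+e-d)*((n:ℝ)+1)*(n:ℝ)) * k (n+1)) / (48*(a*(2*(n:ℝ)-1)+d)) := by
    rcases Nat.eq_zero_or_pos n with rfl | hn
    · rw [hv1def, if_pos rfl]
      norm_num
    · obtain ⟨m, rfl⟩ : ∃ m, n = m+1 := ⟨n-1, by omega⟩
      have hE := E2 m
      rw [hv1def, if_neg (by omega)]
      have hco : (p (m+1+1)).coeff (m+1-1) = (p (m+2)).coeff m := by norm_num
      rw [hco]
      rw [show (p (m+2)).coeff (m+1) = u1 from by rw [hu1def]] at hE
      have hD : (48:ℝ)*(a*(2*((m+1 : ℕ):ℝ)-1)+d) ≠ 0 := by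
        have h48 := had (2*(m:ℤ)+1) (by omega)
        push_cast at h48
        intro hcon
        apply h48
        push_cast at hcon
        linarith
      rw [eq_div_iff hD]
      push_cast
      linear_combination hE
  -- final computation
  have hfin : h (n+1) = h n * W / (k n^2 * k (n+2)) := by
    have hne : k n^2 * k (n+2) ≠ 0 :=
      mul_ne_zero (pow_ne_zero _ (hk0 n)) (hk0 (n+2))
    rw [eq_div_iff hne]
    linarith [hclear]
  have hk0n := hk0 n
  have hk1n := hk0 (n+1)
  have hk2n := hk0 (n+2)
  rw [hfin, hW, hv1', hv2', hu2', hu1']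
  obtain ⟨D1, hD1e⟩ : ∃ x, x = 2*a*(n:ℝ)+d := ⟨_, rfl⟩
  obtain ⟨D2, hD2e⟩ : ∃ x, x = 2*a*((n:ℝ)+1)+d := ⟨_, rfl⟩
  obtain ⟨D3, hD3e⟩ : ∃ x, x = a*(2*(n:ℝ)+1)+d := ⟨_, rfl⟩
  obtain ⟨D4, hD4e⟩ : ∃ x, x = a*(2*(n:ℝ)-1)+d := ⟨_, rfl⟩
  rw [← hD1e] at hD1
  rw [← hD2e] at hD2
  rw [← hD3e] at hD3
  rw [← hD4e] at hD4
  rw [← hD1e, ← hD2e, ← hD3e, ← hD4e]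
  field_simp
  subst hD1e hD2e hD3e hD4e
  ring
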